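/- Let (A, B) be a cyclically monotone pair with respect to (ω, τ) with a, c, a_1, ..., a_k ∈ A and b, b_1, ..., b_k ∈ B. Then ω((abc) b a_1 b_1 ⋯ a_k b_k) = ω((τ(b)·ac) b a_1 b_1 ⋯ a_k b_k). More generally, replacing any occurrence of the element abc by τ(b)ac inside an alternating word does not change the value of ω. -/
import Mathlib


/-- Cyclic monotone independence of a pair of sets `SA`, `SB` with respect to `(ω, τ)`. -/
def CyclicMonotone {C : Type*} [Ring C] [Algebra ℂ C]
    (ω τ : C →ₗ[ℂ] ℂ) (SA SB : Set C) : Prop :=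
  ∀ (xs ys : List C), xs.length = ys.length →
    (∀ x ∈ xs, x ∈ SA) → (∀ y ∈ ys, y ∈ SB) →
    ω (List.zipWith (· * ·) xs ys).prod = ω xs.prod * (ys.map τ).prod

lemma zipWith_ofFn' {α β γ : Type*} (f : α → β → γ) :
    ∀ {k : ℕ} (a : Fin k → α) (b : Fin k → β),
      List.zipWith f (List.ofFn a) (List.ofFn b) = List.ofFn (fun i => f (a i) (b i))
  | 0, _, _ => by simp
  | k + 1, a, b => by
      simp only [List.ofFn_succ, List.zipWith_cons_cons]
      rw [zipWith_ofFn' f (fun i => a i.succ) (fun i => b i.succ)]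

theorem stmt_7 {C : Type*} [Ring C] [Algebra ℂ C] [StarRing C] [StarModule ℂ C]
    (ω τ : C →ₗ[ℂ] ℂ)
    (hτ1 : τ 1 = 1) (hτtr : ∀ x y : C, τ (x * y) = τ (y * x))
    (hωtr : ∀ x y : C, ω (x * y) = ω (y * x))
    (SA SB : Set C) (h1B : (1 : C) ∈ SB)
    (hcm : CyclicMonotone ω τ SA SB)
    (a c : C) (b : C) (ha : a ∈ SA) (hc : c ∈ SA) (hb : b ∈ SB)
    (k : ℕ) (a' b' : Fin k → C) (ha' : ∀ i, a' i ∈ SA) (hb' : ∀ i, b' i ∈ SB) :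
    ω ((a * b * c) * b * (List.ofFn fun i => a' i * b' i).prod) =
      ω ((τ b • (a * c)) * b * (List.ofFn fun i => a' i * b' i).prod) := by
  have hA : ∀ x ∈ a :: c :: List.ofFn a', x ∈ SA := by
    intro x hx
    simp only [List.mem_cons, List.mem_ofFn] at hx
    rcases hx with rfl | rfl | ⟨i, rfl⟩ <;> [exact ha; exact hc; exact ha' i]
  have hB : ∀ y0 : C, y0 ∈ SB → ∀ y ∈ y0 :: b :: List.ofFn b', y ∈ SB := by
    intro y0 hy0 y hy
    simp only [List.mem_cons, List.mem_ofFn] at hy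
    rcases hy with rfl | rfl | ⟨i, rfl⟩ <;> [exact hy0; exact hb; exact hb' i]
  have h1 := hcm (a :: c :: List.ofFn a') (b :: b :: List.ofFn b') (by simp)
    hA (hB b hb)
  have h2 := hcm (a :: c :: List.ofFn a') (1 :: b :: List.ofFn b') (by simp)
    hA (hB 1 h1B)
  simp only [List.zipWith_cons_cons, zipWith_ofFn' (· * ·) a' b', List.prod_cons,
    List.map_cons, hτ1, mul_one, one_mul] at h1 h2
  have e1 : (a * b * c) * b * (List.ofFn fun i => a' i * b' i).prod =
      a * b * (c * b * (List.ofFn fun i => a' i * b' i).prod) := by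
    simp [mul_assoc]
  have e2 : a * c * b * (List.ofFn fun i => a' i * b' i).prod =
      a * (c * b * (List.ofFn fun i => a' i * b' i).prod) := by
    simp [mul_assoc]
  rw [e1, h1, smul_mul_assoc, smul_mul_assoc, map_smul, smul_eq_mul, e2, h2]
  ring
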